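/- The polynomial (∂/∂x)(∫₀^z V̂_ω(y,x) dy) evaluated at x = 1, where V̂_ω(z,x) = V_ω(2z, x/2), equals z²/2 + (1/3)·Σ_{i=2}^{ω} z^{i+1}; equivalently, for each 0 ≤ i ≤ ω, the coefficient of z^{i+1} in this polynomial is E_{L,R}(i)/(i+1) where E_{L,R}(i) = Σ_j j·2^{i-j} e_{i,j}/i! is the Yule-expected number of cherries in a ranked tree of size i, and E_{L,R}(i) = (i+1)/3 for i ≥ 2, E_{L,R}(1) = 1, E_{L,R}(0) = 0. -/

import Mathlib

/-!
Common definitions: plane (ordered) labeled binary trees, the flip relation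
generating the "unordered" identification, ranked trees, Ω-trees, and counts.
-/

/-- Plane rooted binary trees whose internal nodes carry a label. -/
inductive PTree : Type where
  | leaf : PTree
  | node : ℕ → PTree → PTree → PTree
deriving DecidableEq

namespace PTree

/-- Size: the number of internal nodes. -/
def size : PTree → ℕ
  | leaf => 0
  | node _ l r => l.size + r.size + 1

/-- Number of cherries: internal nodes whose two children are leaves. -/
def cherries : PTree → ℕ
  | leaf => 0
  | node _ leaf leaf => 1
  | node _ l r => l.cherries + r.cherries

/-- Multiset of labels of internal nodes. -/
def labels : PTree → Multiset ℕ
  | leaf => 0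
  | node k l r => k ::ₘ (l.labels + r.labels)

/-- Labels increase away from the root: each internal node's label is smaller
than all labels in its subtrees. -/
def Incr : PTree → Prop
  | leaf => True
  | node k l r =>
      (∀ m ∈ l.labels, k < m) ∧ (∀ m ∈ r.labels, k < m) ∧ Incr l ∧ Incr r

/-- A ranked tree of size `n`: labels increase from the root and the internal
labels are exactly `{1, …, n}` (each occurring once). -/
def IsRanked (n : ℕ) (t : PTree) : Prop :=
  t.Incr ∧ t.labels = (Finset.Icc 1 n).val

/-- The Ω-condition: at every internal node, the smaller of the two child
subtrees has at most `ω` internal nodes. -/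
def OmegaOK (ω : ℕ) : PTree → Prop
  | leaf => True
  | node _ l r => min l.size r.size ≤ ω ∧ OmegaOK ω l ∧ OmegaOK ω r

/-- One-step flip: swap the two children of some internal node. -/
inductive Flip : PTree → PTree → Prop
  | swap (k : ℕ) (l r : PTree) : Flip (node k l r) (node k r l)
  | congL {l l' : PTree} (k : ℕ) (r : PTree) : Flip l l' → Flip (node k l r) (node k l' r)
  | congR {r r' : PTree} (k : ℕ) (l : PTree) : Flip r r' → Flip (node k l r) (node k l r')

end PTree

/-- Setoid on trees satisfying `P`, identifying trees up to swapping children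
(so that left/right order is immaterial). -/
def treeSetoid (P : PTree → Prop) : Setoid {t : PTree // P t} :=
  Relation.EqvGen.setoid (fun a b => PTree.Flip a.1 b.1)

/-- `|R_n|` : the number of ranked trees (histories) of size `n`. -/
noncomputable def rankedCount (n : ℕ) : ℕ :=
  Nat.card (Quotient (treeSetoid (PTree.IsRanked n)))

/-- `e_{n,l}` : the number of ranked trees of size `n` with `l` cherries. -/
noncomputable def rankedCountC (n l : ℕ) : ℕ :=
  Nat.card (Quotient (treeSetoid (fun t => PTree.IsRanked n t ∧ t.cherries = l)))

/-- `|Ω^ω_n|` : the number of Ω^ω-trees of size `n`. -/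
noncomputable def omegaCount (ω n : ℕ) : ℕ :=
  Nat.card (Quotient (treeSetoid (fun t => PTree.IsRanked n t ∧ PTree.OmegaOK ω t)))

/-- `|Ω^ω_{n,l}|` : the number of Ω^ω-trees of size `n` with `l` cherries. -/
noncomputable def omegaCountC (ω n l : ℕ) : ℕ :=
  Nat.card (Quotient (treeSetoid
    (fun t => PTree.IsRanked n t ∧ PTree.OmegaOK ω t ∧ t.cherries = l)))

/-- `E_{L,R}(i)`: the Yule-expected number of cherries of a random ranked tree
of size `i`, i.e. `∑_j j · 2^{i-j} e_{i,j} / i!`. -/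
noncomputable def expCherries (i : ℕ) : ℚ :=
  ∑ j ∈ Finset.range (i + 1),
    (j : ℚ) * 2 ^ (i - j) * (rankedCountC i j : ℚ) / (i.factorial : ℚ)

namespace PTree

/-- Number of leaves. -/
def numLeaves : PTree → ℕ
  | leaf => 1
  | node _ l r => l.numLeaves + r.numLeaves

lemma numLeaves_eq_size (t : PTree) : t.numLeaves = t.size + 1 := by
  induction t with
  | leaf => rfl
  | node k l r ihl ihr => simp [numLeaves, size, ihl, ihr]; omega

/-- Cherries of a node in the generic (not both leaves) case. -/
lemma cherries_node {l r : PTree} (h : ¬(l = leaf ∧ r = leaf)) (k : ℕ) :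
    cherries (node k l r) = cherries l + cherries r := by
  cases l with
  | leaf => cases r with
    | leaf => exact absurd ⟨rfl, rfl⟩ h
    | node k' l' r' => rfl
  | node k' l' r' => cases r <;> rfl

lemma cherries_cherry (k : ℕ) : cherries (node k leaf leaf) = 1 := rfl

/-- Replace each leaf (one at a time) by a cherry labeled `k`. -/
def grow (k : ℕ) : PTree → List PTree
  | leaf => [node k leaf leaf]
  | node m l r =>
      ((grow k l).map fun l' => node m l' r) ++ ((grow k r).map fun r' => node m l r')

lemma length_grow (k : ℕ) (t : PTree) : (grow k t).length = t.numLeaves := by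
  induction t with
  | leaf => rfl
  | node m l r ihl ihr => simp [grow, numLeaves, ihl, ihr]

lemma ne_leaf_of_mem_grow {k : ℕ} {t s : PTree} (h : s ∈ grow k t) : s ≠ leaf := by
  induction t with
  | leaf => simp [grow] at h; simp [h]
  | node m l r ihl ihr =>
    simp [grow] at h
    rcases h with ⟨a, _, rfl⟩ | ⟨a, _, rfl⟩ <;> simp

lemma size_of_mem_grow {k : ℕ} {t s : PTree} (h : s ∈ grow k t) : s.size = t.size + 1 := by
  induction t generalizing s with
  | leaf => simp [grow] at h; simp [h, size]
  | node m l r ihl ihr =>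
    simp [grow] at h
    rcases h with ⟨a, ha, rfl⟩ | ⟨a, ha, rfl⟩
    · simp [size, ihl ha]; omega
    · simp [size, ihr ha]; omega

lemma labels_of_mem_grow {k : ℕ} {t s : PTree} (h : s ∈ grow k t) :
    s.labels = k ::ₘ t.labels := by
  induction t generalizing s with
  | leaf => simp [grow] at h; simp [h, labels]
  | node m l r ihl ihr =>
    simp [grow] at h
    rcases h with ⟨a, ha, rfl⟩ | ⟨a, ha, rfl⟩
    · simp only [labels, ihl ha, Multiset.cons_add]
      rw [Multiset.cons_swap]
    · simp only [labels, ihr ha, ← Multiset.singleton_add]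
      abel

end PTree

namespace PTree

lemma incr_of_mem_grow {k : ℕ} {t s : PTree} (hincr : t.Incr)
    (hlt : ∀ m ∈ t.labels, m < k) (h : s ∈ grow k t) : s.Incr := by
  induction t generalizing s with
  | leaf => simp [grow] at h; simp [h, Incr, labels]
  | node m l r ihl ihr =>
    obtain ⟨h1, h2, h3, h4⟩ := hincr
    simp only [labels, Multiset.mem_cons, Multiset.mem_add] at hlt
    simp [grow] at h
    rcases h with ⟨a, ha, rfl⟩ | ⟨a, ha, rfl⟩
    · refine ⟨?_, h2, ihl h3 (fun x hx => hlt x (Or.inr (Or.inl hx))) ha, h4⟩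
      intro x hx
      rw [labels_of_mem_grow ha] at hx
      rcases Multiset.mem_cons.1 hx with rfl | hx
      · exact hlt m (Or.inl rfl)
      · exact h1 x hx
    · refine ⟨h1, ?_, h3, ihr h4 (fun x hx => hlt x (Or.inr (Or.inr hx))) ha⟩
      intro x hx
      rw [labels_of_mem_grow ha] at hx
      rcases Multiset.mem_cons.1 hx with rfl | hx
      · exact hlt m (Or.inl rfl)
      · exact h2 x hx

/-- Remove the (unique) node labeled `k`, replacing it by a leaf. -/
def prune (k : ℕ) : PTree → PTree
  | leaf => leaf
  | node m l r => if m = k then leaf else node m (prune k l) (prune k r)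

lemma prune_eq_self {k : ℕ} {t : PTree} (h : k ∉ t.labels) : prune k t = t := by
  induction t with
  | leaf => rfl
  | node m l r ihl ihr =>
    simp [labels] at h
    simp [prune, Ne.symm h.1, ihl h.2.1, ihr h.2.2]

lemma prune_of_mem_grow {k : ℕ} {t s : PTree} (h : s ∈ grow k t) (hk : k ∉ t.labels) :
    prune k s = t := by
  induction t generalizing s with
  | leaf => simp [grow] at h; simp [h, prune]
  | node m l r ihl ihr =>
    simp [labels] at hk
    simp [grow] at h
    rcases h with ⟨a, ha, rfl⟩ | ⟨a, ha, rfl⟩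
    · simp [prune, Ne.symm hk.1, ihl ha hk.2.1, prune_eq_self hk.2.2]
    · simp [prune, Ne.symm hk.1, ihr ha hk.2.2, prune_eq_self hk.2.1]

lemma mem_grow_prune {k : ℕ} {t : PTree} (hincr : t.Incr)
    (hnd : t.labels.Nodup) (hk : k ∈ t.labels) (hmax : ∀ m ∈ t.labels, m ≤ k) :
    t ∈ grow k (prune k t) := by
  induction t with
  | leaf => simp [labels] at hk
  | node m l r ihl ihr =>
    obtain ⟨h1, h2, h3, h4⟩ := hincr
    simp only [labels, Multiset.mem_cons, Multiset.mem_add] at hk hmax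
    by_cases hm : m = k
    · subst hm
      -- children must be leaves
      have hl : l = leaf := by
        cases l with
        | leaf => rfl
        | node a b c =>
          exfalso
          have : a ∈ labels (node a b c) := by simp [labels]
          exact absurd (hmax a (Or.inr (Or.inl this))) (not_le.2 (h1 a this))
      have hr : r = leaf := by
        cases r with
        | leaf => rfl
        | node a b c =>
          exfalso
          have : a ∈ labels (node a b c) := by simp [labels]
          exact absurd (hmax a (Or.inr (Or.inr this))) (not_le.2 (h2 a this))
      subst hl; subst hr
      simp [prune, grow]
    · have hknd := hnd
      rw [labels, Multiset.nodup_cons, Multiset.nodup_add] at hknd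
      obtain ⟨hm', hndl, hndr, hdisj⟩ := hknd
      rcases hk with rfl | hk | hk
      · exact absurd rfl hm
      · have hkr : k ∉ r.labels := fun hr => (Multiset.disjoint_left.1 hdisj hk) hr
        simp only [prune, if_neg hm, grow, List.mem_append, List.mem_map]
        left
        rw [prune_eq_self hkr]
        exact ⟨l, ihl h3 hndl hk (fun x hx => hmax x (Or.inr (Or.inl hx))), rfl⟩
      · have hkl : k ∉ l.labels := fun hl => (Multiset.disjoint_left.1 hdisj hl) hk
        simp only [prune, if_neg hm, grow, List.mem_append, List.mem_map]
        right
        rw [prune_eq_self hkl]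
        exact ⟨r, ihr h4 hndr hk (fun x hx => hmax x (Or.inr (Or.inr hx))), rfl⟩

lemma nodup_grow (k : ℕ) {t : PTree} (hk : k ∉ t.labels) : (grow k t).Nodup := by
  induction t with
  | leaf => simp [grow]
  | node m l r ihl ihr =>
    simp [labels] at hk
    rw [grow, List.nodup_append]
    refine ⟨(ihl hk.2.1).map ?_, (ihr hk.2.2).map ?_, ?_⟩
    · intro a b h; cases h; rfl
    · intro a b h; cases h; rfl
    · intro s hs s' hs' h
      simp only [List.mem_map] at hs hs'
      obtain ⟨a, ha, rfl⟩ := hs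
      obtain ⟨b, hb, rfl⟩ := hs'
      cases h
      have := size_of_mem_grow hb
      omega

/-- All plane increasing trees with labels `1..n`, as a list. -/
def allTrees : ℕ → List PTree
  | 0 => [leaf]
  | n + 1 => (allTrees n).flatMap (grow (n + 1))

lemma labels_of_mem_allTrees {n : ℕ} {t : PTree} (h : t ∈ allTrees n) :
    t.labels = (Finset.Icc 1 n).val := by
  induction n generalizing t with
  | zero => simp [allTrees] at h; simp [h, labels]
  | succ n ih =>
    simp [allTrees] at h
    obtain ⟨s, hs, ht⟩ := h
    rw [labels_of_mem_grow ht, ih hs]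
    have : Finset.Icc 1 (n+1) = insert (n+1) (Finset.Icc 1 n) := by
      ext x; simp [Finset.mem_Icc]; omega
    rw [this, Finset.insert_val,
      Multiset.ndinsert_of_notMem (by simp [Finset.mem_Icc])]

lemma size_of_mem_allTrees {n : ℕ} {t : PTree} (h : t ∈ allTrees n) : t.size = n := by
  induction n generalizing t with
  | zero => simp [allTrees] at h; simp [h, size]
  | succ n ih =>
    simp [allTrees] at h
    obtain ⟨s, hs, ht⟩ := h
    rw [size_of_mem_grow ht, ih hs]

lemma incr_of_mem_allTrees {n : ℕ} {t : PTree} (h : t ∈ allTrees n) : t.Incr := by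
  induction n generalizing t with
  | zero => simp [allTrees] at h; simp [h, Incr]
  | succ n ih =>
    simp [allTrees] at h
    obtain ⟨s, hs, ht⟩ := h
    refine incr_of_mem_grow (ih hs) ?_ ht
    intro m hm
    rw [labels_of_mem_allTrees hs] at hm
    simp [Finset.mem_Icc] at hm
    omega

lemma labels_prune_le (k : ℕ) (t : PTree) : (prune k t).labels ≤ t.labels := by
  induction t with
  | leaf => simp [prune]
  | node a b c ihb ihc =>
    by_cases h : a = k
    · simp [prune, h, labels]
    · rw [prune, if_neg h]
      simp only [labels]
      exact Multiset.cons_le_cons a (add_le_add ihb ihc)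

lemma incr_prune (k : ℕ) {t : PTree} (h : t.Incr) : (prune k t).Incr := by
  induction t with
  | leaf => simp [prune, Incr]
  | node m l r ihl ihr =>
    obtain ⟨h1, h2, h3, h4⟩ := h
    by_cases hm : m = k
    · simp [prune, hm, Incr]
    · rw [prune, if_neg hm]
      exact ⟨fun x hx => h1 x (Multiset.mem_of_le (labels_prune_le k l) hx),
        fun x hx => h2 x (Multiset.mem_of_le (labels_prune_le k r) hx), ihl h3, ihr h4⟩

lemma mem_allTrees_iff {n : ℕ} {t : PTree} : t ∈ allTrees n ↔ IsRanked n t := by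
  constructor
  · intro h
    exact ⟨incr_of_mem_allTrees h, labels_of_mem_allTrees h⟩
  · rintro ⟨hincr, hlab⟩
    induction n generalizing t with
    | zero =>
      simp at hlab
      cases t with
      | leaf => simp [allTrees]
      | node m l r => simp [labels] at hlab
    | succ n ih =>
      have hk : (n+1) ∈ t.labels := by rw [hlab]; simp [Finset.mem_Icc]
      have hmax : ∀ m ∈ t.labels, m ≤ n+1 := by
        intro m hm; rw [hlab] at hm; simp [Finset.mem_Icc] at hm; omega
      have hnd : t.labels.Nodup := hlab ▸ (Finset.Icc 1 (n+1)).nodup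
      have hmem := mem_grow_prune hincr hnd hk hmax
      -- prune is ranked of size n
      have hlabp : (prune (n+1) t).labels = (Finset.Icc 1 n).val := by
        have := labels_of_mem_grow hmem
        have h2 : (n+1) ::ₘ (prune (n+1) t).labels = (n+1) ::ₘ (Finset.Icc 1 n).val := by
          rw [← this, hlab]
          have : Finset.Icc 1 (n+1) = insert (n+1) (Finset.Icc 1 n) := by
            ext x; simp [Finset.mem_Icc]; omega
          rw [this, Finset.insert_val,
            Multiset.ndinsert_of_notMem (by simp [Finset.mem_Icc])]
        exact (Multiset.cons_inj_right _).1 h2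
      have hincrp : (prune (n+1) t).Incr := incr_prune _ hincr
      have : prune (n+1) t ∈ allTrees n := ih hincrp hlabp
      simp only [allTrees, List.mem_flatMap]
      exact ⟨prune (n+1) t, this, hmem⟩

end PTree

namespace PTree

lemma nodup_allTrees (n : ℕ) : (allTrees n).Nodup := by
  induction n with
  | zero => simp [allTrees]
  | succ n ih =>
    rw [allTrees, List.nodup_flatMap]
    constructor
    · intro t ht
      refine nodup_grow _ ?_
      rw [labels_of_mem_allTrees ht]
      simp [Finset.mem_Icc]
    · refine ih.pairwise_of_forall_ne ?_
      intro a ha b hb hne s hs hs'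
      have hka : (n+1) ∉ a.labels := by
        rw [labels_of_mem_allTrees ha]; simp [Finset.mem_Icc]
      have hkb : (n+1) ∉ b.labels := by
        rw [labels_of_mem_allTrees hb]; simp [Finset.mem_Icc]
      exact hne ((prune_of_mem_grow hs hka).symm.trans (prune_of_mem_grow hs' hkb))

lemma length_allTrees (n : ℕ) : (allTrees n).length = n.factorial := by
  induction n with
  | zero => rfl
  | succ n ih =>
    rw [allTrees, List.length_flatMap]
    have : List.map (List.length ∘ grow (n+1)) (allTrees n)
        = List.map (fun _ => n + 1) (allTrees n) := by
      refine List.map_congr_left fun t ht => ?_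
      show (grow (n+1) t).length = n + 1
      rw [length_grow, numLeaves_eq_size, size_of_mem_allTrees ht]
    rw [show List.map (List.length ∘ grow (n+1)) (allTrees n)
        = List.map (fun x => (grow (n+1) x).length) (allTrees n) from rfl] at *
    rw [this]
    simp only [List.map_const', List.sum_replicate, smul_eq_mul, ih, Nat.factorial]
    rw [Nat.succ_eq_add_one]
    ring

lemma sum_cherries_grow (k : ℕ) (t : PTree) :
    ((grow k t).map cherries).sum + 2 * t.cherries
      = t.numLeaves * t.cherries + t.numLeaves := by
  induction t with
  | leaf => rfl
  | node m l r ihl ihr =>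
    by_cases hc : l = leaf ∧ r = leaf
    · obtain ⟨rfl, rfl⟩ := hc
      rfl
    · rw [grow, List.map_append, List.sum_append, List.map_map, List.map_map]
      have e1 : List.map (cherries ∘ fun l' => node m l' r) (grow k l)
          = List.map (fun l' => cherries l' + cherries r) (grow k l) := by
        refine List.map_congr_left fun a ha => ?_
        show cherries (node m a r) = _
        refine cherries_node (fun h => (ne_leaf_of_mem_grow ha) h.1) m
      have e2 : List.map (cherries ∘ fun r' => node m l r') (grow k r)
          = List.map (fun r' => cherries l + cherries r') (grow k r) := by
        refine List.map_congr_left fun a ha => ?_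
        show cherries (node m l a) = _
        refine cherries_node (fun h => (ne_leaf_of_mem_grow ha) h.2) m
      rw [e1, e2, List.sum_map_add, List.sum_map_add]
      simp only [List.map_const', List.sum_replicate, smul_eq_mul, length_grow]
      rw [cherries_node hc, numLeaves]
      nlinarith [ihl, ihr]

/-- Total number of cherries over all plane increasing trees of size `n`. -/
def cSum (n : ℕ) : ℕ := ((allTrees n).map cherries).sum

lemma cSum_aux (n : ℕ) :
    cSum (n + 1) = ((allTrees n).map fun t => ((grow (n+1) t).map cherries).sum).sum := by
  rw [cSum, allTrees, List.map_flatMap, List.flatMap_def, List.sum_flatten, List.map_map]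
  rfl

lemma cSum_rec (n : ℕ) :
    cSum (n + 1) + 2 * cSum n = (n + 1) * cSum n + (n + 1) * n.factorial := by
  have key : ((allTrees n).map
        (fun t => ((grow (n+1) t).map cherries).sum + 2 * cherries t)).sum
      = ((allTrees n).map (fun t => (n+1) * cherries t + (n+1))).sum := by
    refine congrArg List.sum (List.map_congr_left fun t ht => ?_)
    have h := sum_cherries_grow (n+1) t
    rw [numLeaves_eq_size, size_of_mem_allTrees ht] at h
    exact h
  rw [List.sum_map_add, List.sum_map_add, List.sum_map_mul_left, List.sum_map_mul_left,
    ← cSum_aux, ← cSum] at key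
  rw [key]
  simp [List.map_const', mul_comm, length_allTrees]

end PTree

namespace PTree

lemma cSum_one : cSum 1 = 1 := by decide
lemma cSum_two : cSum 2 = 2 := by decide

lemma three_cSum : ∀ n : ℕ, 2 ≤ n → 3 * cSum n = (n + 1) * n.factorial := by
  intro n hn
  induction n with
  | zero => omega
  | succ n ih =>
    rcases Nat.lt_or_ge n 2 with h | h
    · interval_cases n
      · omega
      · rw [cSum_two]; decide
    · have eq1 := cSum_rec n
      have eq2 := ih h
      have e3 : (n+1) * (3 * cSum n) = (n+1) * ((n+1) * n.factorial) := by rw [eq2]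
      rw [Nat.factorial_succ]
      nlinarith [eq1, eq2, e3]

end PTree

namespace PTree

/-- Root label (0 for a leaf). -/
def key : PTree → ℕ
  | leaf => 0
  | node k _ _ => k

/-- Canonical representative: order children by key. -/
def canon : PTree → PTree
  | leaf => leaf
  | node k l r =>
      if key l ≤ key r then node k (canon l) (canon r) else node k (canon r) (canon l)

lemma canon_leaf : canon leaf = leaf := rfl

lemma canon_eq_leaf_iff {t : PTree} : canon t = leaf ↔ t = leaf := by
  cases t with
  | leaf => rw [canon_leaf]
  | node k l r =>
    constructor
    · intro h; rw [canon] at h; split at h <;> exact absurd h (by simp)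
    · intro h; exact absurd h (by simp)

lemma key_canon (t : PTree) : key (canon t) = key t := by
  cases t with
  | leaf => rfl
  | node k l r => rw [canon]; split <;> rfl

lemma labels_canon (t : PTree) : labels (canon t) = labels t := by
  induction t with
  | leaf => rfl
  | node k l r ihl ihr =>
    rw [canon]; split
    · simp [labels, ihl, ihr]
    · simp only [labels, ihl, ihr]
      rw [add_comm]

lemma size_canon (t : PTree) : size (canon t) = size t := by
  induction t with
  | leaf => rfl
  | node k l r ihl ihr =>
    rw [canon]; split <;> simp [size, ihl, ihr] <;> omega

lemma cherries_canon (t : PTree) : cherries (canon t) = cherries t := by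
  induction t with
  | leaf => rfl
  | node k l r ihl ihr =>
    by_cases hc : l = leaf ∧ r = leaf
    · obtain ⟨rfl, rfl⟩ := hc; rfl
    · have h1 : ¬(canon l = leaf ∧ canon r = leaf) := by
        rw [canon_eq_leaf_iff, canon_eq_leaf_iff]; exact hc
      have h2 : ¬(canon r = leaf ∧ canon l = leaf) := fun h => h1 ⟨h.2, h.1⟩
      rw [canon]; split
      · rw [cherries_node h1, cherries_node hc, ihl, ihr]
      · rw [cherries_node h2, cherries_node hc, ihl, ihr]; omega

lemma incr_canon_iff (t : PTree) : Incr (canon t) ↔ Incr t := by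
  induction t with
  | leaf => exact Iff.rfl
  | node k l r ihl ihr =>
    rw [canon]; split
    · show (∀ m ∈ (canon l).labels, k < m) ∧ (∀ m ∈ (canon r).labels, k < m) ∧ _ ∧ _ ↔ _
      rw [labels_canon, labels_canon, ihl, ihr]
      rfl
    · show (∀ m ∈ (canon r).labels, k < m) ∧ (∀ m ∈ (canon l).labels, k < m) ∧ _ ∧ _ ↔ _
      rw [labels_canon, labels_canon, ihl, ihr]
      constructor
      · rintro ⟨a, b, c, d⟩; exact ⟨b, a, d, c⟩
      · rintro ⟨a, b, c, d⟩; exact ⟨b, a, d, c⟩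

lemma canon_canon (t : PTree) : canon (canon t) = canon t := by
  induction t with
  | leaf => rfl
  | node k l r ihl ihr =>
    rw [canon]; split
    · rw [canon, if_pos, ihl, ihr]
      rw [key_canon, key_canon]; assumption
    · rw [canon, if_pos, ihr, ihl]
      rw [key_canon, key_canon]; omega

/-- Distinct positive labels. -/
def Good (t : PTree) : Prop := t.labels.Nodup ∧ ∀ m ∈ t.labels, 1 ≤ m

lemma good_node {k : ℕ} {l r : PTree} (h : Good (node k l r)) : Good l ∧ Good r := by
  obtain ⟨hnd, hpos⟩ := h
  rw [labels, Multiset.nodup_cons, Multiset.nodup_add] at hnd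
  refine ⟨⟨hnd.2.1, ?_⟩, ⟨hnd.2.2.1, ?_⟩⟩ <;> intro m hm <;>
    exact hpos m (by simp [labels]; tauto)

lemma good_canon {t : PTree} (h : Good t) : Good (canon t) := by
  unfold Good at *; rw [labels_canon]; exact h

lemma key_mem_labels {t : PTree} (h : t ≠ leaf) : key t ∈ t.labels := by
  cases t with
  | leaf => exact absurd rfl h
  | node k l r => simp [key, labels]

/-- In a `Good` node, equal keys of the children force both children to be leaves. -/
lemma key_eq_leaves {k : ℕ} {l r : PTree} (h : Good (node k l r)) (hk : key l = key r) :
    l = leaf ∧ r = leaf := by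
  obtain ⟨hnd, hpos⟩ := h
  rw [labels, Multiset.nodup_cons, Multiset.nodup_add] at hnd
  by_cases hl : l = leaf
  · subst hl
    refine ⟨rfl, ?_⟩
    by_contra hr
    have := hpos (key r) (Multiset.mem_cons.2 (Or.inr (Multiset.mem_add.2 (Or.inr (key_mem_labels hr)))))
    rw [← hk] at this; simp [key] at this
  · by_cases hr : r = leaf
    · subst hr
      have := hpos (key l) (Multiset.mem_cons.2 (Or.inr (Multiset.mem_add.2 (Or.inl (key_mem_labels hl)))))
      rw [hk] at this; simp [key] at this
    · exfalso
      have h1 := key_mem_labels hl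
      have h2 := key_mem_labels hr
      rw [hk] at h1
      exact Multiset.disjoint_left.1 hnd.2.2.2 h1 h2

lemma flip_key {t s : PTree} (h : Flip t s) : key t = key s := by
  cases h <;> rfl

lemma flip_labels {t s : PTree} (h : Flip t s) : labels t = labels s := by
  induction h with
  | swap k l r => simp only [labels]; rw [add_comm]
  | congL k r h ih => simp [labels, ih]
  | congR k l h ih => simp [labels, ih]

lemma flip_canon {t s : PTree} (hg : Good t) (h : Flip t s) : canon t = canon s := by
  induction h with
  | swap k l r =>
    by_cases hlr : key l ≤ key r
    · by_cases hrl : key r ≤ key l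
      · obtain ⟨rfl, rfl⟩ := key_eq_leaves hg (le_antisymm hlr hrl)
        rfl
      · rw [canon, if_pos hlr, canon, if_neg hrl]
    · rw [canon, if_neg hlr, canon, if_pos (by omega)]
  | congL k r h ih =>
    have := ih (good_node hg).1
    rw [canon, canon, flip_key h, this]
  | congR k l h ih =>
    have := ih (good_node hg).2
    rw [canon, canon, flip_key h, this]

lemma eqvgen_labels {t s : PTree} (h : Relation.EqvGen Flip t s) : labels t = labels s := by
  induction h with
  | rel _ _ h => exact flip_labels h
  | refl => rfl
  | symm _ _ _ ih => exact ih.symm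
  | trans _ _ _ _ _ ih1 ih2 => exact ih1.trans ih2

lemma eqvgen_canon {t s : PTree} (h : Relation.EqvGen Flip t s) :
    Good t → canon t = canon s := by
  induction h with
  | rel a b h => exact fun hg => flip_canon hg h
  | refl => exact fun _ => rfl
  | symm a b h ih =>
    intro hgb
    have hga : Good a := by unfold Good; rw [eqvgen_labels h]; exact hgb
    exact (ih hga).symm
  | trans a b c h1 h2 ih1 ih2 =>
    intro hga
    have hgb : Good b := by unfold Good; rw [← eqvgen_labels h1]; exact hga
    exact (ih1 hga).trans (ih2 hgb)

lemma eqvgen_congL {l l' : PTree} (k : ℕ) (r : PTree) (h : Relation.EqvGen Flip l l') :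
    Relation.EqvGen Flip (node k l r) (node k l' r) := by
  induction h with
  | rel _ _ h => exact Relation.EqvGen.rel _ _ (Flip.congL k r h)
  | refl => exact Relation.EqvGen.refl _
  | symm _ _ _ ih => exact Relation.EqvGen.symm _ _ ih
  | trans _ _ _ _ _ ih1 ih2 => exact Relation.EqvGen.trans _ _ _ ih1 ih2

lemma eqvgen_congR {r r' : PTree} (k : ℕ) (l : PTree) (h : Relation.EqvGen Flip r r') :
    Relation.EqvGen Flip (node k l r) (node k l r') := by
  induction h with
  | rel _ _ h => exact Relation.EqvGen.rel _ _ (Flip.congR k l h)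
  | refl => exact Relation.EqvGen.refl _
  | symm _ _ _ ih => exact Relation.EqvGen.symm _ _ ih
  | trans _ _ _ _ _ ih1 ih2 => exact Relation.EqvGen.trans _ _ _ ih1 ih2

lemma eqvgen_canon_self (t : PTree) : Relation.EqvGen Flip t (canon t) := by
  induction t with
  | leaf => exact Relation.EqvGen.refl _
  | node k l r ihl ihr =>
    have h1 : Relation.EqvGen Flip (node k l r) (node k (canon l) (canon r)) :=
      Relation.EqvGen.trans _ _ _ (eqvgen_congL k r ihl) (eqvgen_congR k (canon l) ihr)
    rw [canon]; split
    · exact h1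
    · exact Relation.EqvGen.trans _ _ _ h1
        (Relation.EqvGen.rel _ _ (Flip.swap k (canon l) (canon r)))

end PTree

namespace PTree

/-- Number of internal nodes which are not cherries. -/
def nvars : PTree → ℕ
  | leaf => 0
  | node _ l r => (if l = leaf ∧ r = leaf then 0 else 1) + nvars l + nvars r

lemma nvars_add_cherries (t : PTree) : nvars t + cherries t = size t := by
  induction t with
  | leaf => rfl
  | node k l r ihl ihr =>
    by_cases hc : l = leaf ∧ r = leaf
    · obtain ⟨rfl, rfl⟩ := hc; rfl
    · rw [nvars, if_neg hc, cherries_node hc, size]; omega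

/-- All trees in the flip-class of a canonical tree. -/
def varsF : PTree → Finset PTree
  | leaf => {leaf}
  | node k l r =>
      if key l < key r then
        ((varsF l ×ˢ varsF r).image fun p => node k p.1 p.2) ∪
          ((varsF l ×ˢ varsF r).image fun p => node k p.2 p.1)
      else (varsF l ×ˢ varsF r).image fun p => node k p.1 p.2

lemma canonical_node {k : ℕ} {l r : PTree} (h : canon (node k l r) = node k l r) :
    key l ≤ key r ∧ canon l = l ∧ canon r = r := by
  rw [canon] at h
  split at h
  · rename_i hyes
    injection h with e1 e2 e3
    exact ⟨hyes, e2, e3⟩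
  · rename_i hno
    injection h with e1 e2 e3
    have := key_canon l
    rw [e3] at this
    omega

lemma key_of_mem_varsF {c t : PTree} (h : t ∈ varsF c) : key t = key c := by
  cases c with
  | leaf => simp [varsF] at h; simp [h]
  | node k l r =>
    rw [varsF] at h
    split at h
    · simp only [Finset.mem_union, Finset.mem_image] at h
      rcases h with ⟨p, _, rfl⟩ | ⟨p, _, rfl⟩ <;> rfl
    · simp only [Finset.mem_image] at h
      obtain ⟨p, _, rfl⟩ := h; rfl

lemma mem_varsF_iff {c : PTree} (hg : Good c) (hc : canon c = c) :
    ∀ t : PTree, canon t = c ↔ t ∈ varsF c := by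
  induction c with
  | leaf =>
    intro t
    rw [varsF]
    simp only [Finset.mem_singleton]
    exact canon_eq_leaf_iff
  | node k l r ihl ihr =>
    obtain ⟨hkey, hcl, hcr⟩ := canonical_node hc
    obtain ⟨hgl, hgr⟩ := good_node hg
    have IHl := ihl hgl hcl
    have IHr := ihr hgr hcr
    intro t
    constructor
    · intro h
      cases t with
      | leaf => rw [canon_leaf] at h; exact absurd h (by simp)
      | node k' a b =>
        rw [canon] at h
        split at h
        · rename_i hab
          injection h with e1 e2 e3
          subst e1
          have ha : a ∈ varsF l := (IHl a).1 e2
          have hb : b ∈ varsF r := (IHr b).1 e3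
          rw [varsF]
          split
          · exact Finset.mem_union_left _
              (Finset.mem_image.2 ⟨(a, b), Finset.mem_product.2 ⟨ha, hb⟩, rfl⟩)
          · exact Finset.mem_image.2 ⟨(a, b), Finset.mem_product.2 ⟨ha, hb⟩, rfl⟩
        · rename_i hab
          injection h with e1 e2 e3
          subst e1
          have hb : b ∈ varsF l := (IHl b).1 e2
          have ha : a ∈ varsF r := (IHr a).1 e3
          have hka : key a = key r := by rw [← key_canon a, e3]
          have hkb : key b = key l := by rw [← key_canon b, e2]
          have hlr : key l < key r := by omega
          rw [varsF, if_pos hlr]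
          exact Finset.mem_union_right _
            (Finset.mem_image.2 ⟨(b, a), Finset.mem_product.2 ⟨hb, ha⟩, rfl⟩)
    · intro h
      rw [varsF] at h
      have main : ∀ a b : PTree, a ∈ varsF l → b ∈ varsF r →
          canon (node k a b) = node k l r := by
        intro a b ha hb
        have e2 : canon a = l := (IHl a).2 ha
        have e3 : canon b = r := (IHr b).2 hb
        have hka : key a = key l := by rw [← key_canon a, e2]
        have hkb : key b = key r := by rw [← key_canon b, e3]
        rw [canon, if_pos (by omega), e2, e3]
      have main2 : ∀ a b : PTree, a ∈ varsF l → b ∈ varsF r → key l < key r →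
          canon (node k b a) = node k l r := by
        intro a b ha hb hlr
        have e2 : canon a = l := (IHl a).2 ha
        have e3 : canon b = r := (IHr b).2 hb
        have hka : key a = key l := by rw [← key_canon a, e2]
        have hkb : key b = key r := by rw [← key_canon b, e3]
        rw [canon, if_neg (by omega), e2, e3]
      split at h
      · rename_i hlr
        simp only [Finset.mem_union, Finset.mem_image, Finset.mem_product] at h
        rcases h with ⟨p, ⟨hp1, hp2⟩, rfl⟩ | ⟨p, ⟨hp1, hp2⟩, rfl⟩
        · exact main p.1 p.2 hp1 hp2
        · exact main2 p.1 p.2 hp1 hp2 hlr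
      · simp only [Finset.mem_image, Finset.mem_product] at h
        obtain ⟨p, ⟨hp1, hp2⟩, rfl⟩ := h
        exact main p.1 p.2 hp1 hp2

lemma key_lt_iff {k : ℕ} {l r : PTree} (hg : Good (node k l r))
    (hkey : key l ≤ key r) : key l < key r ↔ ¬(l = leaf ∧ r = leaf) := by
  constructor
  · rintro hlt ⟨rfl, rfl⟩
    simp [key] at hlt
  · intro hne
    rcases Nat.lt_or_ge (key l) (key r) with h | h
    · exact h
    · exfalso
      exact hne (key_eq_leaves hg (by omega))

lemma card_varsF {c : PTree} (hg : Good c) (hc : canon c = c) :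
    (varsF c).card = 2 ^ nvars c := by
  induction c with
  | leaf => rfl
  | node k l r ihl ihr =>
    obtain ⟨hkey, hcl, hcr⟩ := canonical_node hc
    obtain ⟨hgl, hgr⟩ := good_node hg
    have IHl := ihl hgl hcl
    have IHr := ihr hgr hcr
    have hinj1 : Set.InjOn (fun p : PTree × PTree => node k p.1 p.2)
        ((varsF l ×ˢ varsF r) : Finset (PTree × PTree)) := by
      rintro ⟨a, b⟩ _ ⟨a', b'⟩ _ h
      injection h with _ e2 e3
      simp only [Prod.mk.injEq]
      exact ⟨e2, e3⟩
    have hinj2 : Set.InjOn (fun p : PTree × PTree => node k p.2 p.1)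
        ((varsF l ×ˢ varsF r) : Finset (PTree × PTree)) := by
      rintro ⟨a, b⟩ _ ⟨a', b'⟩ _ h
      injection h with _ e2 e3
      simp only [Prod.mk.injEq]
      exact ⟨e3, e2⟩
    rw [varsF, nvars]
    by_cases hlr : key l < key r
    · rw [if_pos hlr, if_neg ((key_lt_iff hg hkey).1 hlr)]
      rw [Finset.card_union_of_disjoint, Finset.card_image_of_injOn hinj1,
        Finset.card_image_of_injOn hinj2, Finset.card_product, IHl, IHr]
      · ring
      · rw [Finset.disjoint_left]
        rintro x h1 h2
        simp only [Finset.mem_image, Finset.mem_product] at h1 h2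
        obtain ⟨⟨a, b⟩, ⟨ha, hb⟩, rfl⟩ := h1
        obtain ⟨⟨a', b'⟩, ⟨ha', hb'⟩, he⟩ := h2
        injection he with _ e2 e3
        have k1 : key a = key l := key_of_mem_varsF ha
        have k2 : key b' = key r := key_of_mem_varsF hb'
        have e2' : b' = a := e2
        rw [e2'] at k2
        omega
    · rw [if_neg hlr, if_pos]
      · rw [Finset.card_image_of_injOn hinj1, Finset.card_product, IHl, IHr]
        ring
      · by_contra hne
        exact hlr ((key_lt_iff hg hkey).2 hne)

end PTree

namespace PTree

lemma flip_nonleaf {a b : PTree} (h : Flip a b) : a ≠ leaf ∧ b ≠ leaf := by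
  cases h <;> exact ⟨by simp, by simp⟩

lemma flip_cherries {a b : PTree} (h : Flip a b) : cherries a = cherries b := by
  induction h with
  | swap k l r =>
    by_cases hc : l = leaf ∧ r = leaf
    · obtain ⟨rfl, rfl⟩ := hc; rfl
    · rw [cherries_node hc, cherries_node (fun h => hc ⟨h.2, h.1⟩)]; omega
  | congL k r h ih =>
    obtain ⟨h1, h2⟩ := flip_nonleaf h
    rw [cherries_node (fun hh => h1 hh.1), cherries_node (fun hh => h2 hh.1), ih]
  | congR k l h ih =>
    obtain ⟨h1, h2⟩ := flip_nonleaf h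
    rw [cherries_node (fun hh => h1 hh.2), cherries_node (fun hh => h2 hh.2), ih]

lemma flip_incr {a b : PTree} (h : Flip a b) : Incr a ↔ Incr b := by
  induction h with
  | swap k l r =>
    show _ ∧ _ ∧ _ ∧ _ ↔ _ ∧ _ ∧ _ ∧ _
    tauto
  | congL k r h ih =>
    show _ ∧ _ ∧ _ ∧ _ ↔ _ ∧ _ ∧ _ ∧ _
    rw [flip_labels h, ih]
  | congR k l h ih =>
    show _ ∧ _ ∧ _ ∧ _ ↔ _ ∧ _ ∧ _ ∧ _
    rw [flip_labels h, ih]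

section Transfer

variable {P : PTree → Prop} (hP : ∀ ⦃a b⦄, Flip a b → (P a ↔ P b))
include hP

lemma eqvgen_P {x y : PTree} (h : Relation.EqvGen Flip x y) : P x ↔ P y := by
  induction h with
  | rel a b hab => exact hP hab
  | refl => exact Iff.rfl
  | symm _ _ _ ih => exact ih.symm
  | trans _ _ _ _ _ ih1 ih2 => exact ih1.trans ih2

lemma eqvgen_subtype {x y : PTree} (h : Relation.EqvGen Flip x y) :
    ∀ (hx : P x) (hy : P y),
      Relation.EqvGen (fun a b : {t : PTree // P t} => Flip a.1 b.1) ⟨x, hx⟩ ⟨y, hy⟩ := by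
  induction h with
  | rel a b hab => exact fun hx hy => Relation.EqvGen.rel _ _ hab
  | refl a => exact fun hx hy => Relation.EqvGen.refl _
  | symm a b hab ih => exact fun hb ha => Relation.EqvGen.symm _ _ (ih ha hb)
  | trans a b c h1 h2 ih1 ih2 =>
    intro ha hc
    have hb : P b := (eqvgen_P hP h1).1 ha
    exact Relation.EqvGen.trans _ _ _ (ih1 ha hb) (ih2 hb hc)

omit hP in
lemma eqvgen_of_subtype {x y : {t : PTree // P t}}
    (h : Relation.EqvGen (fun a b : {t : PTree // P t} => Flip a.1 b.1) x y) :
    Relation.EqvGen Flip x.1 y.1 := by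
  induction h with
  | rel a b hab => exact Relation.EqvGen.rel _ _ hab
  | refl a => exact Relation.EqvGen.refl _
  | symm _ _ _ ih => exact Relation.EqvGen.symm _ _ ih
  | trans _ _ _ _ _ ih1 ih2 => exact Relation.EqvGen.trans _ _ _ ih1 ih2

end Transfer

/-- The finset of ranked trees of size `n` with `j` cherries. -/
noncomputable def rankedA (n j : ℕ) : Finset PTree :=
  (allTrees n).toFinset.filter fun t => t.cherries = j

lemma mem_rankedA {n j : ℕ} {t : PTree} :
    t ∈ rankedA n j ↔ IsRanked n t ∧ t.cherries = j := by
  rw [rankedA, Finset.mem_filter, List.mem_toFinset, mem_allTrees_iff]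

lemma good_of_ranked {n : ℕ} {t : PTree} (h : IsRanked n t) : Good t := by
  obtain ⟨hincr, hlab⟩ := h
  constructor
  · rw [hlab]; exact (Finset.Icc 1 n).nodup
  · intro m hm; rw [hlab] at hm; simp only [Finset.mem_val, Finset.mem_Icc] at hm; omega

lemma cherries_le_size (t : PTree) : t.cherries ≤ t.size := by
  induction t with
  | leaf => exact le_refl 0
  | node k l r ihl ihr =>
    by_cases hc : l = leaf ∧ r = leaf
    · obtain ⟨rfl, rfl⟩ := hc; exact le_refl 1
    · rw [cherries_node hc, size]; omega

lemma rankedCountC_mul (n j : ℕ) :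
    rankedCountC n j * 2 ^ (n - j) = (rankedA n j).card := by
  classical
  set P := fun t : PTree => IsRanked n t ∧ t.cherries = j with hPdef
  have hPA : ∀ t, P t ↔ t ∈ rankedA n j := fun t => mem_rankedA.symm
  have hPflip : ∀ ⦃a b⦄, Flip a b → (P a ↔ P b) := by
    intro a b h
    rw [hPdef]
    show (Incr a ∧ _) ∧ _ ↔ (Incr b ∧ _) ∧ _
    rw [flip_incr h, flip_labels h, flip_cherries h]
  set B := (rankedA n j).image canon with hB
  -- the quotient is in bijection with B
  have hcard : rankedCountC n j = B.card := by
    have hresp : ∀ a b : {t : PTree // P t}, (treeSetoid P).r a b →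
        canon a.1 = canon b.1 := by
      intro a b hab
      exact eqvgen_canon (eqvgen_of_subtype hab)
        (good_of_ranked a.2.1)
    let f : Quotient (treeSetoid P) → {c // c ∈ B} :=
      Quotient.lift
        (fun t : {t : PTree // P t} =>
          (⟨canon t.1, Finset.mem_image_of_mem canon ((hPA _).1 t.2)⟩ : {c // c ∈ B}))
        (fun a b hab => Subtype.ext (hresp a b hab))
    have hbij : Function.Bijective f := by
      constructor
      · refine Quotient.ind₂ ?_
        intro a b hfe
        have h1 : canon a.1 = canon b.1 := congrArg Subtype.val hfe
        have h2 : Relation.EqvGen Flip a.1 b.1 := by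
          refine Relation.EqvGen.trans _ _ _ (eqvgen_canon_self a.1) ?_
          rw [h1]
          exact Relation.EqvGen.symm _ _ (eqvgen_canon_self b.1)
        exact Quotient.sound (eqvgen_subtype hPflip h2 a.2 b.2)
      · rintro ⟨c, hc⟩
        obtain ⟨t, ht, rfl⟩ := Finset.mem_image.1 hc
        exact ⟨⟦⟨t, (hPA t).2 ht⟩⟧, rfl⟩
    rw [rankedCountC]
    rw [Nat.card_eq_of_bijective f hbij, Nat.card_eq_fintype_card, Fintype.card_coe]
  -- fiberwise count
  have hfib : (rankedA n j).card = ∑ c ∈ B, ((rankedA n j).filter fun t => canon t = c).card :=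
    Finset.card_eq_sum_card_fiberwise fun x hx => Finset.mem_image_of_mem canon hx
  have hone : ∀ c ∈ B, ((rankedA n j).filter fun t => canon t = c).card = 2 ^ (n - j) := by
    intro c hc
    obtain ⟨t0, ht0, rfl⟩ := Finset.mem_image.1 hc
    obtain ⟨hr0, hc0⟩ := mem_rankedA.1 ht0
    have hg0 : Good t0 := good_of_ranked hr0
    have hgc : Good (canon t0) := good_canon hg0
    have hcc : canon (canon t0) = canon t0 := canon_canon t0
    have hfil : (rankedA n j).filter (fun t => canon t = canon t0) = varsF (canon t0) := by
      ext t
      rw [Finset.mem_filter]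
      constructor
      · rintro ⟨_, hct⟩
        exact (mem_varsF_iff hgc hcc t).1 hct
      · intro ht
        have hct : canon t = canon t0 := (mem_varsF_iff hgc hcc t).2 ht
        refine ⟨mem_rankedA.2 ⟨⟨?_, ?_⟩, ?_⟩, hct⟩
        · rw [← incr_canon_iff, hct, incr_canon_iff]
          exact hr0.1
        · rw [← labels_canon, hct, labels_canon]
          exact hr0.2
        · rw [← cherries_canon, hct, cherries_canon]
          exact hc0
    rw [hfil, card_varsF hgc hcc]
    congr 1
    have h1 := nvars_add_cherries (canon t0)
    rw [cherries_canon, size_canon, size_of_mem_allTrees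
      (mem_allTrees_iff.2 hr0), hc0] at h1
    omega
  rw [hcard, hfib, Finset.sum_congr rfl hone, Finset.sum_const, smul_eq_mul, mul_comm]

lemma sum_j_card (n : ℕ) :
    ∑ j ∈ Finset.range (n + 1), j * (rankedA n j).card = cSum n := by
  classical
  have h1 : cSum n = ∑ t ∈ (allTrees n).toFinset, t.cherries :=
    (List.sum_toFinset cherries (nodup_allTrees n)).symm
  have hmaps : ∀ t ∈ (allTrees n).toFinset, t.cherries ∈ Finset.range (n + 1) := by
    intro t ht
    rw [List.mem_toFinset] at ht
    have := cherries_le_size t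
    rw [size_of_mem_allTrees ht] at this
    simp only [Finset.mem_range]
    omega
  rw [h1, ← Finset.sum_fiberwise_of_maps_to hmaps cherries]
  refine Finset.sum_congr rfl fun j hj => ?_
  have : ∀ t ∈ (allTrees n).toFinset.filter (fun t => t.cherries = j), t.cherries = j :=
    fun t ht => (Finset.mem_filter.1 ht).2
  rw [Finset.sum_congr rfl this, Finset.sum_const, smul_eq_mul, rankedA, mul_comm]

lemma expCherries_eq (n : ℕ) : expCherries n = (cSum n : ℚ) / (n.factorial : ℚ) := by
  rw [expCherries, ← Finset.sum_div]
  congr 1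
  rw [show ((cSum n : ℚ)) = ((∑ j ∈ Finset.range (n + 1), j * (rankedA n j).card : ℕ) : ℚ) by
    rw [sum_j_card]]
  push_cast
  refine Finset.sum_congr rfl fun j hj => ?_
  rw [show ((rankedA n j).card : ℚ) = ((rankedCountC n j * 2 ^ (n - j) : ℕ) : ℚ) by
    rw [rankedCountC_mul]]
  push_cast
  ring

end PTree

lemma expCherries_zero : expCherries 0 = 0 := by
  rw [PTree.expCherries_eq]
  norm_num [show PTree.cSum 0 = 0 from rfl]

lemma expCherries_one : expCherries 1 = 1 := by
  rw [PTree.expCherries_eq]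
  norm_num [PTree.cSum_one]

lemma expCherries_ge_two {i : ℕ} (hi : 2 ≤ i) : expCherries i = ((i : ℚ) + 1) / 3 := by
  have h3 := PTree.three_cSum i hi
  have hq : (3 : ℚ) * (PTree.cSum i : ℚ) = ((i : ℚ) + 1) * (i.factorial : ℚ) := by
    exact_mod_cast congrArg (fun x : ℕ => (x : ℚ)) h3
  have hf : (i.factorial : ℚ) ≠ 0 := Nat.cast_ne_zero.2 (Nat.factorial_ne_zero i)
  rw [PTree.expCherries_eq, div_eq_div_iff hf (by norm_num : (3:ℚ) ≠ 0)]
  linarith [hq]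

/-- the polynomial `(∂/∂x ∫₀^z V̂_ω(y,x) dy)|_{x=1}`, whose
coefficient of `z^{i+1}` is `E_{L,R}(i)/(i+1)` for `0 ≤ i ≤ ω`, equals
`z²/2 + (1/3)·∑_{i=2}^{ω} z^{i+1}`; equivalently `E_{L,R}(0)=0`,
`E_{L,R}(1)=1` and `E_{L,R}(i)=(i+1)/3` for `i ≥ 2`. -/
theorem expected_cherries_polynomial :
    expCherries 0 = 0 ∧ expCherries 1 = 1 ∧
    (∀ i : ℕ, 2 ≤ i → expCherries i = ((i : ℚ) + 1) / 3) ∧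
    (∀ ω : ℕ, 1 ≤ ω →
      ∑ i ∈ Finset.range (ω + 1),
          Polynomial.C (expCherries i / ((i : ℚ) + 1)) * Polynomial.X ^ (i + 1) =
        Polynomial.C (1 / 2 : ℚ) * Polynomial.X ^ 2 +
          Polynomial.C (1 / 3 : ℚ) * ∑ i ∈ Finset.Icc 2 ω, Polynomial.X ^ (i + 1)) := by
  refine ⟨expCherries_zero, expCherries_one, fun i hi => expCherries_ge_two hi, ?_⟩
  intro ω hω
  have hset : Finset.range (ω + 1) = insert 0 (insert 1 (Finset.Icc 2 ω)) := by
    ext x; simp [Finset.mem_Icc]; omega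
  rw [hset, Finset.sum_insert (by simp [Finset.mem_Icc]),
    Finset.sum_insert (by simp [Finset.mem_Icc])]
  rw [expCherries_zero, expCherries_one]
  have hrest : ∑ i ∈ Finset.Icc 2 ω,
      Polynomial.C (expCherries i / ((i : ℚ) + 1)) * Polynomial.X ^ (i + 1) =
      Polynomial.C (1 / 3 : ℚ) * ∑ i ∈ Finset.Icc 2 ω, Polynomial.X ^ (i + 1) := by
    rw [Finset.mul_sum]
    refine Finset.sum_congr rfl fun i hi => ?_
    have h2 : 2 ≤ i := (Finset.mem_Icc.1 hi).1
    rw [expCherries_ge_two h2]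
    have : ((i : ℚ) + 1) ≠ 0 := by positivity
    rw [div_div, mul_comm (3 : ℚ), ← div_div, div_self this]
  rw [hrest]
  norm_num
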